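/- If B₁ and B₂ are symmetric real n×n matrices with trace zero, then ‖[B₁,B₁]‖² + ‖[B₁,B₂]‖² + ‖[B₂,B₁]‖² + ‖[B₂,B₂]‖² ≤ (‖B₁‖² + ‖B₂‖²)², i.e., 2‖[B₁,B₂]‖² ≤ (‖B₁‖² + ‖B₂‖²)². -/
import Mathlib


open Matrix

noncomputable def frobSq {n : ℕ} (A : Matrix (Fin n) (Fin n) ℝ) : ℝ :=
  (Aᵀ * A).trace

def mcomm {n : ℕ} (A B : Matrix (Fin n) (Fin n) ℝ) : Matrix (Fin n) (Fin n) ℝ :=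
  A * B - B * A

lemma frobSq_eq_sum {n : ℕ} (A : Matrix (Fin n) (Fin n) ℝ) :
    frobSq A = ∑ i, ∑ j, (A j i) ^ 2 := by
  simp [frobSq, Matrix.trace, Matrix.mul_apply, Matrix.diag, sq]

lemma frobSq_nonneg {n : ℕ} (A : Matrix (Fin n) (Fin n) ℝ) : 0 ≤ frobSq A := by
  rw [frobSq_eq_sum]; positivity

lemma frobSq_neg {n : ℕ} (A : Matrix (Fin n) (Fin n) ℝ) : frobSq (-A) = frobSq A := by
  simp [frobSq_eq_sum]

lemma frobSq_conj {n : ℕ} (U M : Matrix (Fin n) (Fin n) ℝ) (hU : U * Uᵀ = 1) :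
    frobSq (Uᵀ * M * U) = frobSq M := by
  unfold frobSq
  have h1 : (Uᵀ * M * U)ᵀ * (Uᵀ * M * U) = Uᵀ * (Mᵀ * ((U * Uᵀ) * (M * U))) := by
    simp only [Matrix.transpose_mul, Matrix.transpose_transpose]; noncomm_ring
  rw [h1, hU, one_mul, Matrix.trace_mul_comm,
    show Mᵀ * (M * U) * Uᵀ = Mᵀ * M * (U * Uᵀ) by noncomm_ring, hU, Matrix.mul_one]

lemma key_diag {n : ℕ} (d : Fin n → ℝ) (B : Matrix (Fin n) (Fin n) ℝ) :
    frobSq (mcomm (diagonal d) B) ≤ 2 * frobSq (diagonal d) * frobSq B := by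
  have hd : frobSq (diagonal d) = ∑ k, (d k) ^ 2 := by
    rw [frobSq_eq_sum]
    simp [Matrix.diagonal_apply, Finset.sum_ite_eq', sq]
  rw [hd, frobSq_eq_sum, frobSq_eq_sum]
  rw [show (2 * ∑ k, d k ^ 2) * ∑ i, ∑ j, B j i ^ 2
      = ∑ i, ∑ j, (2 * ∑ k, d k ^ 2) * B j i ^ 2 by rw [Finset.mul_sum]; congr 1; ext i; rw [Finset.mul_sum]]
  apply Finset.sum_le_sum
  intro i _
  apply Finset.sum_le_sum
  intro j _
  have hent : mcomm (diagonal d) B j i = (d j - d i) * B j i := by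
    simp [mcomm, Matrix.sub_apply, Matrix.diagonal_mul, Matrix.mul_diagonal]
    ring
  rw [hent]
  rcases eq_or_ne j i with h | h
  · subst h; simp; positivity
  · have hsub : (d j) ^ 2 + (d i) ^ 2 ≤ ∑ k, (d k) ^ 2 := by
      have : ∑ k ∈ ({j, i} : Finset (Fin n)), (d k) ^ 2 ≤ ∑ k, (d k) ^ 2 :=
        Finset.sum_le_sum_of_subset_of_nonneg (Finset.subset_univ _)
          (fun k _ _ => sq_nonneg _)
      rwa [Finset.sum_pair h] at this
    nlinarith [sq_nonneg (B j i), sq_nonneg ((d j + d i) * B j i),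
      mul_le_mul_of_nonneg_right hsub (sq_nonneg (B j i))]

lemma key {n : ℕ} (A B : Matrix (Fin n) (Fin n) ℝ) (hA : A.IsSymm) :
    frobSq (mcomm A B) ≤ 2 * frobSq A * frobSq B := by
  have hH : A.IsHermitian := by
    rw [Matrix.IsHermitian, Matrix.conjTranspose_eq_transpose_of_trivial]; exact hA
  set U : Matrix (Fin n) (Fin n) ℝ := (Matrix.IsHermitian.eigenvectorUnitary hH : Matrix (Fin n) (Fin n) ℝ) with hUdef
  have hstar : star U = Uᵀ := by
    rw [Matrix.star_eq_conjTranspose, Matrix.conjTranspose_eq_transpose_of_trivial]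
  have hU1 : U * Uᵀ = 1 := by
    rw [← hstar]; exact (Matrix.mem_unitaryGroup_iff).mp (Matrix.IsHermitian.eigenvectorUnitary hH).2
  have hU2 : Uᵀ * U = 1 := by
    rw [← hstar]; exact (Matrix.mem_unitaryGroup_iff').mp (Matrix.IsHermitian.eigenvectorUnitary hH).2
  set d : Fin n → ℝ := RCLike.ofReal ∘ hH.eigenvalues with hddef
  have hspec : A = U * diagonal d * Uᵀ := by
    rw [← hstar]; exact hH.spectral_theorem
  set D : Matrix (Fin n) (Fin n) ℝ := diagonal d with hDdef
  set B' : Matrix (Fin n) (Fin n) ℝ := Uᵀ * B * U with hB'def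
  have hc : mcomm A B = U * (mcomm D B') * Uᵀ := by
    rw [mcomm, mcomm, hB'def, hspec]
    rw [show U * (D * (Uᵀ * B * U) - Uᵀ * B * U * D) * Uᵀ
        = (U * D * Uᵀ) * B * (U * Uᵀ) - (U * Uᵀ) * B * (U * D * Uᵀ) by noncomm_ring,
      hU1, Matrix.mul_one, Matrix.one_mul]
  have hfc : frobSq (mcomm A B) = frobSq (mcomm D B') := by
    rw [hc, show U * (mcomm D B') * Uᵀ = Uᵀᵀ * (mcomm D B') * Uᵀ by rw [Matrix.transpose_transpose]]
    exact frobSq_conj Uᵀ (mcomm D B') (by rw [Matrix.transpose_transpose]; exact hU2)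
  have hfA : frobSq A = frobSq D := by
    rw [hspec, show U * D * Uᵀ = Uᵀᵀ * D * Uᵀ by rw [Matrix.transpose_transpose]]
    exact frobSq_conj Uᵀ D (by rw [Matrix.transpose_transpose]; exact hU2)
  have hfB : frobSq B = frobSq B' := (frobSq_conj U B hU1).symm
  rw [hfc, hfA, hfB, hDdef]
  exact key_diag d B'

/-- DDVV matrix inequality for m = 2. -/
theorem ddvv_m2 {n : ℕ} (B₁ B₂ : Matrix (Fin n) (Fin n) ℝ)
    (h₁ : B₁.IsSymm) (h₂ : B₂.IsSymm) (t₁ : B₁.trace = 0) (t₂ : B₂.trace = 0) :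
    frobSq (mcomm B₁ B₁) + frobSq (mcomm B₁ B₂) + frobSq (mcomm B₂ B₁) +
      frobSq (mcomm B₂ B₂) ≤ (frobSq B₁ + frobSq B₂) ^ 2 := by
  have e1 : mcomm B₁ B₁ = 0 := by simp [mcomm]
  have e2 : mcomm B₂ B₂ = 0 := by simp [mcomm]
  have e3 : mcomm B₂ B₁ = -(mcomm B₁ B₂) := by rw [mcomm, mcomm, neg_sub]
  have h0 : frobSq (0 : Matrix (Fin n) (Fin n) ℝ) = 0 := by simp [frobSq]
  rw [e1, e2, e3, h0, frobSq_neg]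
  have hk := key B₁ B₂ h₁
  have ha := frobSq_nonneg B₁
  have hb := frobSq_nonneg B₂
  nlinarith [sq_nonneg (frobSq B₁ - frobSq B₂)]
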